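/- Let T > 0, let (Ω, P) be a probability space, and let (ν_n)_{n∈ℕ} be a sequence of Borel-measurable random variables with values in C([0,T], ℝ) (equipped with the uniform norm) such that, P-almost surely, the function t ↦ ν_n(t) is nondecreasing on [0,T]. Let X be a Borel-measurable C([0,T], ℝ)-valued random variable. Suppose that for every finite family t₁, …, t_k ∈ [0,T], the law of the vector (ν_n(t₁), …, ν_n(t_k)) converges weakly in ℝ^k to the law of (X(t₁), …, X(t_k)) as n → ∞. Then the law of ν_n converges weakly, as a sequence of probability measures on C([0,T], ℝ), to the law of X. -/

import Mathlib

open MeasureTheory Filter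

noncomputable section
namespace Stmt5Aux

variable {T : ℝ}

/-- grid point i*T/(k+1) -/
def gp (hT : 0 < T) (k : ℕ) (i : Fin (k+2)) : Set.Icc (0:ℝ) T :=
  ⟨i * T / (k+1), by
    constructor
    · positivity
    · rw [div_le_iff₀ (by positivity)]
      have hi : (i : ℝ) ≤ (k:ℝ) + 1 := by
        have := i.isLt
        exact_mod_cast Nat.lt_succ_iff.mp this
      nlinarith⟩

lemma gp_coe (hT : 0 < T) (k : ℕ) (i : Fin (k+2)) :
    (gp hT k i : ℝ) = i * T / (k+1) := rfl

/-- hat function centered at grid point i -/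
def hat (k : ℕ) (i : Fin (k+2)) : C(Set.Icc (0:ℝ) T, ℝ) :=
  ⟨fun t => max 0 (1 - |(t:ℝ) * (k+1) / T - i|), by fun_prop⟩

/-- piecewise linear interpolation -/
def lin (k : ℕ) (a : Fin (k+2) → ℝ) : C(Set.Icc (0:ℝ) T, ℝ) :=
  ∑ i, a i • hat k i

lemma continuous_lin (k : ℕ) : Continuous (fun a => lin (T := T) k a) :=
  continuous_finset_sum _ fun i _ => (continuous_apply i).smul continuous_const

lemma collapse (hT : 0 < T) (k : ℕ) (t : Set.Icc (0:ℝ) T) :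
    ∃ (i : Fin (k+1)) (θ : ℝ), 0 ≤ θ ∧ θ ≤ 1 ∧
      gp hT k i.castSucc ≤ t ∧ t ≤ gp hT k i.succ ∧
      ∀ a : Fin (k+2) → ℝ, lin k a t = (1-θ) * a i.castSucc + θ * a i.succ := by
  obtain ⟨t, ht0, htT⟩ := t
  set s : ℝ := t * (k+1) / T with hs
  have hkpos : (0:ℝ) < (k:ℝ) + 1 := by positivity
  have hs0 : 0 ≤ s := by positivity
  have hsk : s ≤ k + 1 := by
    rw [hs, div_le_iff₀ hT]; nlinarith
  have hts : t = s * T / (k+1) := by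
    rw [hs]; field_simp
  set i0 : ℕ := min (Nat.floor s) k with hi0
  have hi0k : i0 ≤ k := min_le_right _ _
  have hi0s : (i0 : ℝ) ≤ s := by
    have : (i0 : ℝ) ≤ (Nat.floor s : ℝ) := by exact_mod_cast min_le_left _ _
    exact this.trans (Nat.floor_le hs0)
  have hsi1 : s ≤ i0 + 1 := by
    rcases le_or_gt (Nat.floor s) k with h | h
    · have : i0 = Nat.floor s := min_eq_left h
      rw [this]; exact (Nat.lt_floor_add_one s).le
    · have : i0 = k := min_eq_right h.le
      rw [this]; exact hsk
  refine ⟨⟨i0, Nat.lt_succ_of_le hi0k⟩, s - i0, by linarith, by linarith, ?_, ?_, ?_⟩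
  · show ((i0:ℝ) * T / (k+1) : ℝ) ≤ t
    rw [hts]; gcongr
  · show (t:ℝ) ≤ (((⟨i0, Nat.lt_succ_of_le hi0k⟩ : Fin (k+1)).succ : ℕ) : ℝ) * T / (k+1)
    have : (((⟨i0, Nat.lt_succ_of_le hi0k⟩ : Fin (k+1)).succ : ℕ) : ℝ) = (i0:ℝ)+1 := by
      push_cast [Fin.val_succ]; ring
    rw [this, hts]; gcongr
  · intro a
    have happ : ∀ (j : Fin (k+2)), (a j • hat k j) ⟨t, ht0, htT⟩
        = a j * max 0 (1 - |s - j|) := by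
      intro j
      simp [hat, hs, ContinuousMap.smul_apply]
    have hlin : lin k a ⟨t, ht0, htT⟩ = ∑ j, a j * max 0 (1 - |s - j|) := by
      rw [lin, ContinuousMap.sum_apply]
      exact Finset.sum_congr rfl fun j _ => happ j
    rw [hlin]
    set ic : Fin (k+2) := Fin.castSucc ⟨i0, Nat.lt_succ_of_le hi0k⟩ with hic
    set is' : Fin (k+2) := Fin.succ ⟨i0, Nat.lt_succ_of_le hi0k⟩ with his
    have hicv : (ic : ℕ) = i0 := rfl
    have hisv : (is' : ℕ) = i0 + 1 := rfl
    have hne : ic ≠ is' := by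
      intro h
      have : (ic:ℕ) = (is':ℕ) := by rw [h]
      omega
    have hsub : ({ic, is'} : Finset (Fin (k+2))) ⊆ Finset.univ := Finset.subset_univ _
    have hvanish : ∀ j ∈ Finset.univ, j ∉ ({ic, is'} : Finset (Fin (k+2))) →
        a j * max 0 (1 - |s - j|) = 0 := by
      intro j _ hj
      simp only [Finset.mem_insert, Finset.mem_singleton] at hj
      push_neg at hj
      obtain ⟨h1, h2⟩ := hj
      have hj1 : (j:ℕ) ≠ i0 := fun h => h1 (by ext; rw [hicv]; exact h)
      have hj2 : (j:ℕ) ≠ i0 + 1 := fun h => h2 (by ext; rw [hisv]; exact h)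
      have habs : 1 ≤ |s - j| := by
        rcases lt_or_gt_of_ne hj1 with h | h
        · -- j < i0
          have : (j:ℝ) + 1 ≤ i0 := by exact_mod_cast h
          rw [abs_of_nonneg (by linarith)]
          linarith
        · -- j ≥ i0 + 2
          have hj' : i0 + 2 ≤ (j:ℕ) := by omega
          have : (i0:ℝ) + 2 ≤ j := by exact_mod_cast hj'
          rw [abs_of_nonpos (by linarith)]
          linarith
      have : max 0 (1 - |s - j|) = 0 := max_eq_left (by linarith)
      rw [this, mul_zero]
    rw [← Finset.sum_subset hsub hvanish, Finset.sum_pair hne]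
    have hv1 : ((ic : ℕ) : ℝ) = i0 := by rw [hicv]
    have hv2 : ((is' : ℕ) : ℝ) = i0 + 1 := by rw [hisv]; push_cast; ring
    rw [hv1, hv2]
    have e1 : max 0 (1 - |s - i0|) = 1 - (s - i0) := by
      rw [abs_of_nonneg (by linarith)]
      exact max_eq_right (by linarith)
    have e2 : max 0 (1 - |s - ((i0:ℝ)+1)|) = s - i0 := by
      rw [abs_of_nonpos (by linarith)]
      have : 1 - -(s - ((i0:ℝ)+1)) = s - i0 := by ring
      rw [this]
      exact max_eq_right (by linarith)
    rw [e1, e2]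
    ring


/-- evaluations at grid points -/
def proj (hT : 0 < T) (k : ℕ) (u : C(Set.Icc (0:ℝ) T, ℝ)) : Fin (k+2) → ℝ :=
  fun i => u (gp hT k i)

/-- maximal increment over the grid -/
def mxi (k : ℕ) (a : Fin (k+2) → ℝ) : ℝ :=
  Finset.univ.sup' Finset.univ_nonempty (fun i : Fin (k+1) => a i.succ - a i.castSucc)

lemma continuous_mxi (k : ℕ) : Continuous (mxi k) := by
  have h := Continuous.finset_sup'
    (f := fun (i : Fin (k+1)) (a : Fin (k+2) → ℝ) => a i.succ - a i.castSucc)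
    (s := Finset.univ) Finset.univ_nonempty
    (fun i _ => (continuous_apply (i.succ : Fin (k+2))).sub
      (continuous_apply (i.castSucc : Fin (k+2))))
  have he : mxi k = Finset.univ.sup'  Finset.univ_nonempty
      (fun (i : Fin (k+1)) (a : Fin (k+2) → ℝ) => a i.succ - a i.castSucc) := by
    funext a
    rw [mxi, Finset.sup'_apply]
  rw [he]
  exact h

lemma gp_succ_sub (hT : 0 < T) (k : ℕ) (i : Fin (k+1)) :
    (gp hT k i.succ : ℝ) - (gp hT k i.castSucc : ℝ) = T / (k+1) := by
  rw [gp_coe, gp_coe]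
  have h1 : ((i.succ : Fin (k+2)) : ℕ) = (i:ℕ) + 1 := rfl
  have h2 : ((i.castSucc : Fin (k+2)) : ℕ) = (i:ℕ) := rfl
  rw [h1, h2]
  push_cast
  field_simp
  ring

lemma gp_mono (hT : 0 < T) (k : ℕ) (i : Fin (k+1)) :
    gp hT k i.castSucc ≤ gp hT k i.succ := by
  show ((gp hT k _ : ℝ)) ≤ (gp hT k _ : ℝ)
  have := gp_succ_sub hT k i
  have hd : 0 < T / (k+1) := by positivity
  linarith

lemma mxi_nonneg_of_monotone (hT : 0 < T) (k : ℕ) {u : C(Set.Icc (0:ℝ) T, ℝ)}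
    (hm : Monotone u) : 0 ≤ mxi k (proj hT k u) := by
  unfold mxi
  refine le_trans ?_ (Finset.le_sup'
    (fun i : Fin (k+1) => proj hT k u i.succ - proj hT k u i.castSucc)
    (Finset.mem_univ (0 : Fin (k+1))))
  have := hm (gp_mono hT k 0)
  simp only [proj]
  linarith

lemma dist_le_mxi (hT : 0 < T) (k : ℕ) {u : C(Set.Icc (0:ℝ) T, ℝ)}
    (hm : Monotone u) :
    dist u (lin k (proj hT k u)) ≤ mxi k (proj hT k u) := by
  rw [ContinuousMap.dist_le (mxi_nonneg_of_monotone hT k hm)]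
  intro t
  obtain ⟨i, θ, hθ0, hθ1, hl, hr, heq⟩ := collapse hT k t
  rw [heq (proj hT k u)]
  set x := proj hT k u i.castSucc with hx
  set y := proj hT k u i.succ with hy
  have hxy : x ≤ y := hm (gp_mono hT k i)
  have hut1 : x ≤ u t := hm hl
  have hut2 : u t ≤ y := hm hr
  rw [Real.dist_eq]
  have habs : |u t - ((1-θ) * x + θ * y)| ≤ y - x := by
    rw [abs_le]; constructor <;> nlinarith
  refine habs.trans ?_
  rw [hx, hy]
  unfold mxi
  exact Finset.le_sup'
    (fun j : Fin (k+1) => proj hT k u j.succ - proj hT k u j.castSucc)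
    (Finset.mem_univ i)

lemma dist_le_of_modulus (hT : 0 < T) (k : ℕ) {u : C(Set.Icc (0:ℝ) T, ℝ)} {ε : ℝ}
    (hε : 0 ≤ ε)
    (h : ∀ a b : Set.Icc (0:ℝ) T, dist a b ≤ T / (k+1) → dist (u a) (u b) ≤ ε) :
    dist u (lin k (proj hT k u)) ≤ ε := by
  rw [ContinuousMap.dist_le hε]
  intro t
  obtain ⟨i, θ, hθ0, hθ1, hl, hr, heq⟩ := collapse hT k t
  rw [heq (proj hT k u)]
  have hgs := gp_succ_sub hT k i
  have hl' : ((gp hT k i.castSucc : ℝ)) ≤ (t:ℝ) := hl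
  have hr' : ((t:ℝ)) ≤ (gp hT k i.succ : ℝ) := hr
  have hd1 : dist t (gp hT k i.castSucc) ≤ T / (k+1) := by
    rw [Subtype.dist_eq, Real.dist_eq, abs_of_nonneg (by linarith)]
    linarith
  have hd2 : dist t (gp hT k i.succ) ≤ T / (k+1) := by
    rw [Subtype.dist_eq, Real.dist_eq, abs_of_nonpos (by linarith)]
    linarith
  have h1 : |u t - proj hT k u i.castSucc| ≤ ε := by
    have := h t (gp hT k i.castSucc) hd1
    rwa [Real.dist_eq] at this
  have h2 : |u t - proj hT k u i.succ| ≤ ε := by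
    have := h t (gp hT k i.succ) hd2
    rwa [Real.dist_eq] at this
  rw [Real.dist_eq]
  have key : u t - ((1-θ) * proj hT k u i.castSucc + θ * proj hT k u i.succ)
      = (1-θ) * (u t - proj hT k u i.castSucc) + θ * (u t - proj hT k u i.succ) := by ring
  rw [key]
  calc |(1-θ) * (u t - proj hT k u i.castSucc) + θ * (u t - proj hT k u i.succ)|
      ≤ |(1-θ) * (u t - proj hT k u i.castSucc)| + |θ * (u t - proj hT k u i.succ)| :=
        abs_add_le _ _
    _ ≤ (1-θ) * ε + θ * ε := add_le_add
        (by rw [abs_mul, abs_of_nonneg (by linarith : (0:ℝ) ≤ 1-θ)]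
            exact mul_le_mul_of_nonneg_left h1 (by linarith))
        (by rw [abs_mul, abs_of_nonneg hθ0]
            exact mul_le_mul_of_nonneg_left h2 hθ0)
    _ = ε := by ring

lemma mxi_le_of_modulus (hT : 0 < T) (k : ℕ) {u : C(Set.Icc (0:ℝ) T, ℝ)} {ε : ℝ}
    (h : ∀ a b : Set.Icc (0:ℝ) T, dist a b ≤ T / (k+1) → dist (u a) (u b) ≤ ε) :
    mxi k (proj hT k u) ≤ ε := by
  unfold mxi
  apply Finset.sup'_le
  intro i _
  have hgs := gp_succ_sub hT k i
  have hd0 : 0 < T / (k+1) := by positivity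
  have hd : dist (gp hT k i.succ) (gp hT k i.castSucc) ≤ T / (k+1) := by
    rw [Subtype.dist_eq, Real.dist_eq, abs_of_nonneg (by linarith)]
    linarith
  have := h _ _ hd
  rw [Real.dist_eq] at this
  calc proj hT k u i.succ - proj hT k u i.castSucc
      ≤ |u (gp hT k i.succ) - u (gp hT k i.castSucc)| := le_abs_self _
    _ ≤ ε := this


section Core

lemma integrable_of_abs_bound {Ω : Type*} [MeasurableSpace Ω] {P : Measure Ω}
    [IsFiniteMeasure P] {g : Ω → ℝ} (hm : AEStronglyMeasurable g P) {C : ℝ}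
    (h : ∀ ω, |g ω| ≤ C) : Integrable g P := by
  refine ⟨hm, ?_⟩
  apply MeasureTheory.HasFiniteIntegral.of_bounded (C := C)
  filter_upwards with ω
  simpa [Real.norm_eq_abs] using h ω

lemma core_lipschitz (T : ℝ) (hT : 0 < T) {Ω : Type*} [MeasurableSpace Ω]
    (P : Measure Ω) [IsProbabilityMeasure P]
    (ν : ℕ → Ω → C(Set.Icc (0 : ℝ) T, ℝ)) (X : Ω → C(Set.Icc (0 : ℝ) T, ℝ))
    (hν : ∀ n, @Measurable Ω C(Set.Icc (0 : ℝ) T, ℝ) _ (borel _) (ν n))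
    (hX : @Measurable Ω C(Set.Icc (0 : ℝ) T, ℝ) _ (borel _) X)
    (hmono : ∀ n, ∀ᵐ ω ∂P, Monotone (ν n ω))
    (hfdd : ∀ (k : ℕ) (t : Fin k → Set.Icc (0 : ℝ) T)
      (g : BoundedContinuousFunction (Fin k → ℝ) ℝ),
      Tendsto (fun n => ∫ ω, g (fun i => ν n ω (t i)) ∂P) atTop
        (nhds (∫ ω, g (fun i => X ω (t i)) ∂P)))
    (f : C(Set.Icc (0 : ℝ) T, ℝ) → ℝ) (K : NNReal) (M : ℝ)
    (hf : LipschitzWith K f) (hfM : ∀ x, |f x| ≤ M) :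
    Tendsto (fun n => ∫ ω, f (ν n ω) ∂P) atTop (nhds (∫ ω, f (X ω) ∂P)) := by
  letI : MeasurableSpace C(Set.Icc (0 : ℝ) T, ℝ) := borel _
  haveI : BorelSpace C(Set.Icc (0 : ℝ) T, ℝ) := ⟨rfl⟩
  have hM0 : 0 ≤ M := le_trans (abs_nonneg _) (hfM 0)
  have hprojc : ∀ k : ℕ, Continuous (fun u : C(Set.Icc (0 : ℝ) T, ℝ) => proj hT k u) :=
    fun k => continuous_pi fun i => continuous_eval_const (gp hT k i)
  -- the H test functions
  have Hcont : ∀ k : ℕ, Continuous (fun a : Fin (k+2) → ℝ =>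
      max 0 (min (2*M) ((K:ℝ) * mxi k a))) := fun k =>
    continuous_const.max (continuous_const.min (continuous_const.mul (continuous_mxi k)))
  have Hbdd : ∀ (k : ℕ) (a : Fin (k+2) → ℝ),
      ‖max 0 (min (2*M) ((K:ℝ) * mxi k a))‖ ≤ 2*M := by
    intro k a
    rw [Real.norm_eq_abs, abs_of_nonneg (le_max_left _ _)]
    exact max_le (by linarith) (min_le_left _ _)
  set Hfun : ∀ k : ℕ, BoundedContinuousFunction (Fin (k+2) → ℝ) ℝ := fun k =>
    BoundedContinuousFunction.ofNormedAddCommGroup _ (Hcont k) (2*M) (Hbdd k) with hHfun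
  have Happly : ∀ (k : ℕ) (a : Fin (k+2) → ℝ),
      Hfun k a = max 0 (min (2*M) ((K:ℝ) * mxi k a)) := fun k a => rfl
  -- the G test functions
  set Gfun : ∀ k : ℕ, BoundedContinuousFunction (Fin (k+2) → ℝ) ℝ := fun k =>
    BoundedContinuousFunction.ofNormedAddCommGroup (fun a => f (lin k a))
      (hf.continuous.comp (continuous_lin k)) M
      (fun a => by simpa [Real.norm_eq_abs] using hfM (lin k a)) with hGfun
  have Gapply : ∀ (k : ℕ) (a : Fin (k+2) → ℝ), Gfun k a = f (lin k a) := fun k a => rfl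
  -- the m functions
  set mfun : ℕ → C(Set.Icc (0 : ℝ) T, ℝ) → ℝ := fun k u =>
    min (2*M) ((K:ℝ) * dist u (lin k (proj hT k u))) with hmfun
  have mcont : ∀ k, Continuous (mfun k) := fun k =>
    continuous_const.min (continuous_const.mul (continuous_id.dist ((continuous_lin k).comp (hprojc k))))
  have mnonneg : ∀ k u, 0 ≤ mfun k u := fun k u =>
    le_min (by linarith) (mul_nonneg K.coe_nonneg dist_nonneg)
  have mbdd : ∀ k u, mfun k u ≤ 2*M := fun k u => min_le_left _ _
  -- pointwise Lipschitz-type estimate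
  have lip_est : ∀ (u v : C(Set.Icc (0 : ℝ) T, ℝ)), |f u - f v| ≤ min (2*M) ((K:ℝ) * dist u v) := by
    intro u v
    refine le_min ?_ ?_
    · calc |f u - f v| ≤ |f u| + |f v| := abs_sub _ _
        _ ≤ 2*M := by have := hfM u; have := hfM v; linarith
    · have := hf.dist_le_mul u v
      rwa [Real.dist_eq] at this
  -- (E1): monotone case
  have E1 : ∀ (k : ℕ) (u : C(Set.Icc (0 : ℝ) T, ℝ)), Monotone u →
      |f u - Gfun k (proj hT k u)| ≤ Hfun k (proj hT k u) := by
    intro k u hm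
    rw [Gapply, Happly]
    refine le_trans (lip_est u (lin k (proj hT k u))) ?_
    refine le_trans ?_ (le_max_right _ _)
    refine min_le_min le_rfl ?_
    exact mul_le_mul_of_nonneg_left (dist_le_mxi hT k hm) (K.coe_nonneg)
  -- (E2): general case
  have E2 : ∀ (k : ℕ) (u : C(Set.Icc (0 : ℝ) T, ℝ)), |Gfun k (proj hT k u) - f u| ≤ mfun k u := by
    intro k u
    rw [Gapply, abs_sub_comm]
    exact le_trans (lip_est u (lin k (proj hT k u))) le_rfl
  -- integrability facts
  have int_f : ∀ n, Integrable (fun ω => f (ν n ω)) P :=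
    fun n => integrable_of_abs_bound
      ((hf.continuous.measurable.comp (hν n)).aestronglyMeasurable) (fun ω => hfM _)
  have int_fX : Integrable (fun ω => f (X ω)) P :=
    integrable_of_abs_bound
      ((hf.continuous.measurable.comp hX).aestronglyMeasurable) (fun ω => hfM _)
  have int_G : ∀ k n, Integrable (fun ω => Gfun k (proj hT k (ν n ω))) P := by
    intro k n
    refine integrable_of_abs_bound ?_ (C := M) ?_
    · exact (((Gfun k).continuous.comp (hprojc k)).measurable.comp (hν n)).aestronglyMeasurable
    · intro ω; rw [Gapply]; exact hfM _
  have int_GX : ∀ k, Integrable (fun ω => Gfun k (proj hT k (X ω))) P := by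
    intro k
    refine integrable_of_abs_bound ?_ (C := M) ?_
    · exact (((Gfun k).continuous.comp (hprojc k)).measurable.comp hX).aestronglyMeasurable
    · intro ω; rw [Gapply]; exact hfM _
  have int_H : ∀ k n, Integrable (fun ω => Hfun k (proj hT k (ν n ω))) P := by
    intro k n
    refine integrable_of_abs_bound ?_ (C := 2*M) ?_
    · exact (((Hfun k).continuous.comp (hprojc k)).measurable.comp (hν n)).aestronglyMeasurable
    · intro ω; rw [← Real.norm_eq_abs]; exact Hbdd k _
  have int_HX : ∀ k, Integrable (fun ω => Hfun k (proj hT k (X ω))) P := by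
    intro k
    refine integrable_of_abs_bound ?_ (C := 2*M) ?_
    · exact (((Hfun k).continuous.comp (hprojc k)).measurable.comp hX).aestronglyMeasurable
    · intro ω; rw [← Real.norm_eq_abs]; exact Hbdd k _
  have int_mX : ∀ k, Integrable (fun ω => mfun k (X ω)) P := by
    intro k
    refine integrable_of_abs_bound ?_ (C := 2*M) ?_
    · exact ((mcont k).measurable.comp hX).aestronglyMeasurable
    · intro ω; rw [abs_of_nonneg (mnonneg k _)]; exact mbdd k _
  -- pointwise convergence to zero of the k-indexed error
  have pointwise_zero : ∀ u : C(Set.Icc (0 : ℝ) T, ℝ),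
      Tendsto (fun k => Hfun k (proj hT k u) + mfun k u) atTop (nhds 0) := by
    intro u
    rw [Metric.tendsto_atTop]
    intro ε hε
    set Kr : ℝ := (K : ℝ) with hKr
    have hKr0 : 0 ≤ Kr := K.coe_nonneg
    set ε' : ℝ := ε / (2 * (Kr + 1)) with hε'
    have hε'0 : 0 < ε' := by positivity
    have huc := CompactSpace.uniformContinuous_of_continuous u.continuous
    rw [Metric.uniformContinuous_iff] at huc
    obtain ⟨δ₀, hδ₀, hδ⟩ := huc ε' hε'0
    obtain ⟨N, hN⟩ := exists_nat_gt (T / δ₀)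
    refine ⟨N, fun k hk => ?_⟩
    have hk1 : T / (k + 1 : ℝ) < δ₀ := by
      rw [div_lt_iff₀ (by positivity)]
      have h1 : T / δ₀ < (N:ℝ) := hN
      have h2 : (N:ℝ) ≤ k := by exact_mod_cast hk
      rw [div_lt_iff₀ hδ₀] at h1
      nlinarith
    have hmod : ∀ a b : Set.Icc (0:ℝ) T, dist a b ≤ T / (k+1) → dist (u a) (u b) ≤ ε' := by
      intro a b hab
      exact (hδ (lt_of_le_of_lt hab hk1)).le
    have h1 : mxi k (proj hT k u) ≤ ε' := mxi_le_of_modulus hT k hmod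
    have h2 : dist u (lin k (proj hT k u)) ≤ ε' := dist_le_of_modulus hT k hε'0.le hmod
    have hH : Hfun k (proj hT k u) ≤ Kr * ε' := by
      rw [Happly]
      refine max_le ?_ ?_
      · positivity
      · exact le_trans (min_le_right _ _) (by nlinarith)
    have hH0 : 0 ≤ Hfun k (proj hT k u) := by rw [Happly]; exact le_max_left _ _
    have hm : mfun k u ≤ Kr * ε' := le_trans (min_le_right _ _) (by nlinarith)
    have hm0 : 0 ≤ mfun k u := mnonneg k u
    rw [Real.dist_eq, sub_zero, abs_of_nonneg (by linarith)]
    have : Kr * ε' + Kr * ε' < ε := by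
      rw [hε']
      rw [div_eq_inv_mul]
      have h3 : Kr < Kr + 1 := by linarith
      have h4 : 0 < Kr + 1 := by linarith
      calc Kr * ((2 * (Kr+1))⁻¹ * ε) + Kr * ((2 * (Kr+1))⁻¹ * ε)
          = (Kr / (Kr + 1)) * ε := by field_simp; ring
        _ < 1 * ε := by
            apply mul_lt_mul_of_pos_right _ hε
            rw [div_lt_one h4]; exact h3
        _ = ε := one_mul ε
    linarith
  -- S k → 0 by dominated convergence
  have hS : Tendsto (fun k => ∫ ω, (Hfun k (proj hT k (X ω)) + mfun k (X ω)) ∂P)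
      atTop (nhds 0) := by
    have h0 : (0:ℝ) = ∫ (_ : Ω), (0:ℝ) ∂P := by simp
    rw [h0]
    apply tendsto_integral_of_dominated_convergence (fun _ => 4*M)
    · intro k
      exact (((((Hfun k).continuous.comp (hprojc k)).measurable.comp hX)).add
        ((mcont k).measurable.comp hX)).aestronglyMeasurable
    · exact integrable_const _
    · intro k
      filter_upwards with ω
      rw [Real.norm_eq_abs]
      have hH0 : 0 ≤ Hfun k (proj hT k (X ω)) := by rw [Happly]; exact le_max_left _ _
      have hHb : Hfun k (proj hT k (X ω)) ≤ 2*M := by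
        rw [Happly]
        exact max_le (by linarith) (min_le_left _ _)
      have := mnonneg k (X ω); have := mbdd k (X ω)
      rw [abs_of_nonneg (by linarith)]
      linarith
    · filter_upwards with ω
      exact pointwise_zero (X ω)
  -- main assembly
  rw [Metric.tendsto_atTop]
  intro ε hε
  -- choose k
  rw [Metric.tendsto_atTop] at hS
  obtain ⟨k, hk⟩ := hS (ε/4) (by linarith)
  specialize hk k le_rfl
  rw [Real.dist_eq, sub_zero] at hk
  have hSk : ∫ ω, (Hfun k (proj hT k (X ω)) + mfun k (X ω)) ∂P < ε/4 :=
    lt_of_le_of_lt (le_abs_self _) hk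
  have hsplit : ∫ ω, (Hfun k (proj hT k (X ω)) + mfun k (X ω)) ∂P
      = (∫ ω, Hfun k (proj hT k (X ω)) ∂P) + ∫ ω, mfun k (X ω) ∂P :=
    integral_add (int_HX k) (int_mX k)
  -- convergence from fdd hypotheses
  have hconvH : Tendsto (fun n => ∫ ω, Hfun k (proj hT k (ν n ω)) ∂P) atTop
      (nhds (∫ ω, Hfun k (proj hT k (X ω)) ∂P)) := hfdd (k+2) (gp hT k) (Hfun k)
  have hconvG : Tendsto (fun n => ∫ ω, Gfun k (proj hT k (ν n ω)) ∂P) atTop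
      (nhds (∫ ω, Gfun k (proj hT k (X ω)) ∂P)) := hfdd (k+2) (gp hT k) (Gfun k)
  rw [Metric.tendsto_atTop] at hconvH hconvG
  obtain ⟨N1, hN1⟩ := hconvH (ε/4) (by linarith)
  obtain ⟨N2, hN2⟩ := hconvG (ε/4) (by linarith)
  refine ⟨max N1 N2, fun n hn => ?_⟩
  have hn1 := hN1 n (le_trans (le_max_left _ _) hn)
  have hn2 := hN2 n (le_trans (le_max_right _ _) hn)
  rw [Real.dist_eq] at hn1 hn2 ⊢
  -- step A
  have stepA : |(∫ ω, f (ν n ω) ∂P) - ∫ ω, Gfun k (proj hT k (ν n ω)) ∂P|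
      ≤ ∫ ω, Hfun k (proj hT k (ν n ω)) ∂P := by
    rw [← integral_sub (int_f n) (int_G k n), ← Real.norm_eq_abs]
    refine le_trans (norm_integral_le_integral_norm _) ?_
    simp only [Real.norm_eq_abs]
    apply integral_mono_ae ((int_f n).sub (int_G k n)).abs (int_H k n)
    filter_upwards [hmono n] with ω hω
    exact E1 k (ν n ω) hω
  -- step C
  have stepC : |(∫ ω, Gfun k (proj hT k (X ω)) ∂P) - ∫ ω, f (X ω) ∂P|
      ≤ ∫ ω, mfun k (X ω) ∂P := by
    rw [← integral_sub (int_GX k) int_fX, ← Real.norm_eq_abs]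
    refine le_trans (norm_integral_le_integral_norm _) ?_
    simp only [Real.norm_eq_abs]
    apply integral_mono_ae ((int_GX k).sub int_fX).abs (int_mX k)
    filter_upwards with ω
    exact E2 k (X ω)
  -- combine
  have hHn : ∫ ω, Hfun k (proj hT k (ν n ω)) ∂P
      < (∫ ω, Hfun k (proj hT k (X ω)) ∂P) + ε/4 := by
    have := abs_lt.mp hn1
    linarith [this.2]
  have hHX0 : 0 ≤ ∫ ω, Hfun k (proj hT k (X ω)) ∂P :=
    integral_nonneg fun ω => le_max_left _ _
  have hmX0 : 0 ≤ ∫ ω, mfun k (X ω) ∂P := integral_nonneg fun ω => mnonneg k _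
  calc |(∫ ω, f (ν n ω) ∂P) - ∫ ω, f (X ω) ∂P|
      ≤ |(∫ ω, f (ν n ω) ∂P) - ∫ ω, Gfun k (proj hT k (ν n ω)) ∂P|
        + |(∫ ω, Gfun k (proj hT k (ν n ω)) ∂P) - ∫ ω, Gfun k (proj hT k (X ω)) ∂P|
        + |(∫ ω, Gfun k (proj hT k (X ω)) ∂P) - ∫ ω, f (X ω) ∂P| := by
        have h1 := abs_sub_le (∫ ω, f (ν n ω) ∂P)
          (∫ ω, Gfun k (proj hT k (ν n ω)) ∂P) (∫ ω, f (X ω) ∂P)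
        have h2 := abs_sub_le (∫ ω, Gfun k (proj hT k (ν n ω)) ∂P)
          (∫ ω, Gfun k (proj hT k (X ω)) ∂P) (∫ ω, f (X ω) ∂P)
        linarith
    _ < ((∫ ω, Hfun k (proj hT k (X ω)) ∂P) + ε/4) + ε/4 + ∫ ω, mfun k (X ω) ∂P := by
        have := stepA.trans_lt hHn
        linarith
    _ < ε := by
        have : (∫ ω, Hfun k (proj hT k (X ω)) ∂P) + ∫ ω, mfun k (X ω) ∂P < ε/4 := by
          rw [← hsplit]; exact hSk
        linarith

end Core

end Stmt5Aux
end

open Stmt5Aux in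
/-- If `ν n` are `C([0,T],ℝ)`-valued random variables which are almost surely nondecreasing
in time, `X` is a `C([0,T],ℝ)`-valued random variable, and the finite dimensional
distributions of `ν n` converge weakly to those of `X`, then the law of `ν n` converges
weakly (tested against all bounded continuous functions on `C([0,T],ℝ)` with the uniform
norm) to the law of `X`. -/
theorem stmt5 (T : ℝ) (hT : 0 < T) {Ω : Type*} [MeasurableSpace Ω]
    (P : Measure Ω) [IsProbabilityMeasure P]
    (ν : ℕ → Ω → C(Set.Icc (0 : ℝ) T, ℝ)) (X : Ω → C(Set.Icc (0 : ℝ) T, ℝ))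
    (hν : ∀ n, @Measurable Ω C(Set.Icc (0 : ℝ) T, ℝ) _ (borel _) (ν n))
    (hX : @Measurable Ω C(Set.Icc (0 : ℝ) T, ℝ) _ (borel _) X)
    (hmono : ∀ n, ∀ᵐ ω ∂P, Monotone (ν n ω))
    (hfdd : ∀ (k : ℕ) (t : Fin k → Set.Icc (0 : ℝ) T)
      (g : BoundedContinuousFunction (Fin k → ℝ) ℝ),
      Tendsto (fun n => ∫ ω, g (fun i => ν n ω (t i)) ∂P) atTop
        (nhds (∫ ω, g (fun i => X ω (t i)) ∂P))) :
    ∀ g : BoundedContinuousFunction C(Set.Icc (0 : ℝ) T, ℝ) ℝ,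
      Tendsto (fun n => ∫ ω, g (ν n ω) ∂P) atTop (nhds (∫ ω, g (X ω) ∂P)) := by
  letI : MeasurableSpace C(Set.Icc (0 : ℝ) T, ℝ) := borel _
  haveI : BorelSpace C(Set.Icc (0 : ℝ) T, ℝ) := ⟨rfl⟩
  intro g
  -- laws as probability measures
  set μs : ℕ → ProbabilityMeasure C(Set.Icc (0 : ℝ) T, ℝ) := fun n =>
    ⟨P.map (ν n), Measure.isProbabilityMeasure_map (hν n).aemeasurable⟩ with hμs
  set μX : ProbabilityMeasure C(Set.Icc (0 : ℝ) T, ℝ) :=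
    ⟨P.map X, Measure.isProbabilityMeasure_map hX.aemeasurable⟩ with hμX
  have hmap : ∀ (n : ℕ) (φ : C(Set.Icc (0 : ℝ) T, ℝ) → ℝ), Continuous φ →
      ∫ x, φ x ∂(μs n : Measure _) = ∫ ω, φ (ν n ω) ∂P := fun n φ hφ =>
    integral_map (hν n).aemeasurable hφ.aestronglyMeasurable
  have hmapX : ∀ (φ : C(Set.Icc (0 : ℝ) T, ℝ) → ℝ), Continuous φ →
      ∫ x, φ x ∂(μX : Measure _) = ∫ ω, φ (X ω) ∂P := fun φ hφ =>
    integral_map hX.aemeasurable hφ.aestronglyMeasurable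
  suffices h : Tendsto μs atTop (nhds μX) by
    have h2 := ProbabilityMeasure.tendsto_iff_forall_integral_tendsto.mp h g
    have e1 : (fun n => ∫ x, g x ∂(μs n : Measure _)) = fun n => ∫ ω, g (ν n ω) ∂P := by
      funext n; exact hmap n g g.continuous
    have e2 : ∫ x, g x ∂(μX : Measure _) = ∫ ω, g (X ω) ∂P := hmapX g g.continuous
    rwa [e1, e2] at h2
  -- closed-set limsup condition
  have hclosed : ∀ F : Set C(Set.Icc (0 : ℝ) T, ℝ), IsClosed F →
      (atTop.limsup fun n => (μs n : Measure _) F) ≤ (μX : Measure _) F := by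
    intro F hF
    rcases F.eq_empty_or_nonempty with rfl | hFne
    · simp
    -- key: for each ε > 0, limsup ≤ μX (cthickening ε F)
    have hkey : ∀ ε : ℝ, 0 < ε →
        (atTop.limsup fun n => (μs n : Measure _) F)
          ≤ (μX : Measure _) (Metric.cthickening ε F) := by
      intro ε hε
      set fε : C(Set.Icc (0 : ℝ) T, ℝ) → ℝ :=
        fun x => max 0 (1 - Metric.infDist x F / ε) with hfε
      have hfε01 : ∀ x, 0 ≤ fε x ∧ fε x ≤ 1 := by
        intro x
        refine ⟨le_max_left _ _, max_le zero_le_one ?_⟩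
        have := Metric.infDist_nonneg (x := x) (s := F)
        have : 0 ≤ Metric.infDist x F / ε := by positivity
        linarith
      have hfεb : ∀ x, |fε x| ≤ 1 := by
        intro x
        rw [abs_of_nonneg (hfε01 x).1]
        exact (hfε01 x).2
      have hlip : LipschitzWith (Real.toNNReal ε⁻¹) fε := by
        apply LipschitzWith.of_dist_le_mul
        intro x y
        have hd : |Metric.infDist x F - Metric.infDist y F| ≤ dist x y := by
          have := (Metric.lipschitz_infDist_pt F).dist_le_mul x y
          rw [Real.dist_eq] at this
          simpa using this
        rw [Real.dist_eq, hfε]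
        have h1 : |max 0 (1 - Metric.infDist x F / ε) - max 0 (1 - Metric.infDist y F / ε)|
            ≤ |(1 - Metric.infDist x F / ε) - (1 - Metric.infDist y F / ε)| := by
          rw [max_comm 0 (1 - Metric.infDist x F / ε), max_comm 0 (1 - Metric.infDist y F / ε)]
          exact abs_max_sub_max_le_abs _ _ _
        have h2 : |(1 - Metric.infDist x F / ε) - (1 - Metric.infDist y F / ε)|
            = |Metric.infDist x F - Metric.infDist y F| / ε := by
          have e : (1 - Metric.infDist x F / ε) - (1 - Metric.infDist y F / ε)
              = (Metric.infDist y F - Metric.infDist x F) / ε := by ring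
          rw [e, abs_div, abs_of_pos hε, abs_sub_comm]
        have h3 : ((Real.toNNReal ε⁻¹ : NNReal) : ℝ) = ε⁻¹ :=
          Real.coe_toNNReal _ (by positivity)
        calc |max 0 (1 - Metric.infDist x F / ε) - max 0 (1 - Metric.infDist y F / ε)|
            ≤ |Metric.infDist x F - Metric.infDist y F| / ε := by rw [← h2]; exact h1
          _ ≤ dist x y / ε := by gcongr
          _ = (Real.toNNReal ε⁻¹ : ℝ) * dist x y := by rw [h3, div_eq_inv_mul]
      -- convergence of integrals of fε
      have hconv : Tendsto (fun n => ∫ ω, fε (ν n ω) ∂P) atTop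
          (nhds (∫ ω, fε (X ω) ∂P)) :=
        core_lipschitz T hT P ν X hν hX hmono hfdd fε _ 1 hlip hfεb
      -- integrability of fε against the laws
      have int_fε : ∀ m : Measure C(Set.Icc (0 : ℝ) T, ℝ), IsProbabilityMeasure m →
          Integrable fε m := by
        intro m hm
        exact integrable_of_abs_bound hlip.continuous.aestronglyMeasurable hfεb
      -- indicator comparisons
      have hind1 : ∀ n, (((μs n : Measure _) F)).toReal ≤ ∫ x, fε x ∂(μs n : Measure _) := by
        intro n
        rw [← measureReal_def, ← integral_indicator_one hF.measurableSet]
        apply integral_mono ((integrable_const (1:ℝ)).indicator hF.measurableSet)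
          (int_fε _ inferInstance)
        intro x
        by_cases hx : x ∈ F
        · have hfx : fε x = 1 := by
            rw [hfε]
            simp only
            rw [Metric.infDist_zero_of_mem hx, zero_div, sub_zero]
            exact max_eq_right zero_le_one
          rw [Set.indicator_of_mem hx, hfx]
        · rw [Set.indicator_of_notMem hx]
          exact (hfε01 x).1
      have hind2 : ∫ x, fε x ∂(μX : Measure _)
          ≤ (((μX : Measure _)) (Metric.cthickening ε F)).toReal := by
        rw [← measureReal_def, ← integral_indicator_one Metric.isClosed_cthickening.measurableSet]
        apply integral_mono (int_fε _ inferInstance)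
          ((integrable_const (1:ℝ)).indicator Metric.isClosed_cthickening.measurableSet)
        intro x
        by_cases hx : x ∈ Metric.cthickening ε F
        · rw [Set.indicator_of_mem hx]
          exact (hfε01 x).2
        · rw [Set.indicator_of_notMem hx]
          rw [Metric.mem_cthickening_iff, not_le] at hx
          have hne : EMetric.infEdist x F ≠ ⊤ := by
            obtain ⟨y, hy⟩ := hFne
            exact ne_top_of_le_ne_top (edist_ne_top x y) (EMetric.infEdist_le_edist_of_mem hy)
          have hlt : ε < Metric.infDist x F := by
            have := ENNReal.toReal_lt_toReal ENNReal.ofReal_ne_top hne |>.mpr hx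
            rwa [ENNReal.toReal_ofReal hε.le] at this
          have : 1 - Metric.infDist x F / ε ≤ 0 := by
            rw [sub_nonpos, le_div_iff₀ hε]
            nlinarith
          rw [hfε]
          simp only [max_eq_left this]
          exact le_refl 0
      set L : ℝ := ∫ x, fε x ∂(μX : Measure _) with hL
      have hL0 : 0 ≤ L := integral_nonneg fun x => (hfε01 x).1
      -- limsup bound with a δ margin
      refine ENNReal.le_of_forall_pos_le_add fun δ hδ hfin => ?_
      have hδ' : (0:ℝ) < δ := hδ
      have hev : ∀ᶠ n in atTop, (μs n : Measure _) F
          ≤ (μX : Measure _) (Metric.cthickening ε F) + (δ : ENNReal) := by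
        have hLconv : Tendsto (fun n => ∫ x, fε x ∂(μs n : Measure _)) atTop (nhds L) := by
          have e1 : (fun n => ∫ x, fε x ∂(μs n : Measure _))
              = fun n => ∫ ω, fε (ν n ω) ∂P := by
            funext n; exact hmap n fε hlip.continuous
          have e2 : L = ∫ ω, fε (X ω) ∂P := hmapX fε hlip.continuous
          rw [e1, e2]
          exact hconv
        have hev1 : ∀ᶠ n in atTop, ∫ x, fε x ∂(μs n : Measure _) < L + δ :=
          hLconv.eventually_lt_const (by linarith)
        filter_upwards [hev1] with n hn
        have hbound : (((μs n : Measure _) F)).toReal ≤ L + δ :=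
          le_trans (hind1 n) hn.le
        have h4 : (μs n : Measure _) F ≤ ENNReal.ofReal (L + δ) := by
          rw [ENNReal.le_ofReal_iff_toReal_le (measure_ne_top _ _) (by linarith)]
          exact hbound
        refine h4.trans ?_
        rw [ENNReal.ofReal_add hL0 hδ'.le, ENNReal.ofReal_coe_nnreal]
        gcongr
        calc ENNReal.ofReal L
            ≤ ENNReal.ofReal ((((μX : Measure _)) (Metric.cthickening ε F)).toReal) := by
              gcongr
          _ = (μX : Measure _) (Metric.cthickening ε F) :=
              ENNReal.ofReal_toReal (measure_ne_top _ _)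
      exact limsup_le_of_le (by isBoundedDefault) hev
    -- let ε → 0
    have htend : Tendsto (fun ε => (μX : Measure _) (Metric.cthickening ε F))
        (nhdsWithin 0 (Set.Ioi 0)) (nhds ((μX : Measure _) F)) := by
      have := tendsto_measure_cthickening_of_isClosed
        (μ := (μX : Measure _)) (s := F) ⟨1, one_pos, measure_ne_top _ _⟩ hF
      exact this.mono_left nhdsWithin_le_nhds
    refine ge_of_tendsto htend ?_
    filter_upwards [self_mem_nhdsWithin] with ε hε
    exact hkey ε hε
  -- pass to open sets and conclude
  have hopen := limsup_measure_closed_le_iff_liminf_measure_open_ge.mp hclosed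
  apply tendsto_of_forall_isOpen_le_liminf
  intro G hG
  have h1 := hopen G hG
  -- convert from ENNReal to NNReal
  have aux : (ENNReal.ofNNReal (atTop.liminf fun i => μs i G)) =
      atTop.liminf (fun i => (ENNReal.ofNNReal (μs i G))) := by
    refine Monotone.map_liminf_of_continuousAt (F := atTop) ENNReal.coe_mono (fun i => μs i G)
      ENNReal.continuous_coe.continuousAt ?_ ?_
    · exact Filter.IsBoundedUnder.isCoboundedUnder_ge ⟨1, by
        simp only [eventually_map, eventually_atTop]
        exact ⟨0, fun n _ => ProbabilityMeasure.apply_le_one _ _⟩⟩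
    · exact ⟨0, by simp⟩
  rw [← ENNReal.coe_le_coe, aux]
  simp only [ProbabilityMeasure.ennreal_coeFn_eq_coeFn_toMeasure]
  exact h1
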